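/- Let d ≥ 1 and let p = (p₁,…,p_{d+1}) and p' = (p₁',…,p_{d+1}') be two (d+1)-tuples of points of ℝ^d, each affinely independent (in general position). Define Σ = { (q,q') ∈ ℝ^d × ℝ^d : ‖p_i − q‖ = ‖p_i' − q'‖ for all i = 1,…,d+1 }, and let σ (resp. σ') be the projection of Σ to the first (resp. second) factor ℝ^d. Then there exists an invertible affine transformation T : ℝ^d → ℝ^d such that: (i) for all q, q' ∈ ℝ^d, (q,q') ∈ Σ if and only if q ∈ σ and q' = T(q); (ii) T(σ) = σ'; and (iii) σ is the zero set of a polynomial in d variables of total degree at most 2 (a quadric). -/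

import Mathlib

open MvPolynomial RealInnerProductSpace

/-- `Σ_{p,p'} = {(q,q') ∈ ℝ^d × ℝ^d : ‖p_i − q‖ = ‖p_i' − q'‖ for i = 1, …, d+1}`. -/
def SigmaSet (d : ℕ) (p p' : Fin (d + 1) → EuclideanSpace ℝ (Fin d)) :
    Set (EuclideanSpace ℝ (Fin d) × EuclideanSpace ℝ (Fin d)) :=
  {qq | ∀ i : Fin (d + 1), dist (p i) qq.1 = dist (p' i) qq.2}

/-- From an affinely independent `(d+1)`-tuple, the map `q ↦ (⟪p i - p 0, q⟫)ᵢ` is a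
linear equivalence onto `{i // i ≠ 0} → ℝ`. -/
lemma exists_innerEquiv (d : ℕ) (hd : 1 ≤ d) (p : Fin (d + 1) → EuclideanSpace ℝ (Fin d))
    (hp : AffineIndependent ℝ p) :
    ∃ G : EuclideanSpace ℝ (Fin d) ≃ₗ[ℝ] ({i : Fin (d + 1) // i ≠ 0} → ℝ),
      ∀ q i, G q i = ⟪p i.1 - p 0, q⟫ := by
  set v : {i : Fin (d + 1) // i ≠ 0} → EuclideanSpace ℝ (Fin d) := fun i => p i.1 - p 0 with hv
  have hli : LinearIndependent ℝ v := by
    have := (affineIndependent_iff_linearIndependent_vsub ℝ p 0).mp hp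
    simpa [hv, vsub_eq_sub] using this
  haveI : Nonempty {i : Fin (d + 1) // i ≠ 0} :=
    ⟨⟨⟨1, by omega⟩, by simp [Fin.ext_iff]⟩⟩
  have hcard : Fintype.card {i : Fin (d + 1) // i ≠ 0} = Module.finrank ℝ (EuclideanSpace ℝ (Fin d)) := by
    simp [finrank_euclideanSpace_fin]
  set b := basisOfLinearIndependentOfCardEqFinrank hli hcard with hb
  have hbco : ⇑b = v := coe_basisOfLinearIndependentOfCardEqFinrank hli hcard
  set G₀ : EuclideanSpace ℝ (Fin d) →ₗ[ℝ] ({i : Fin (d + 1) // i ≠ 0} → ℝ) :=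
    LinearMap.pi (fun i => ((innerSL ℝ (v i)).toLinearMap)) with hG₀
  have hG₀app : ∀ q i, G₀ q i = ⟪v i, q⟫ := fun q i => rfl
  have hinj : Function.Injective G₀ := by
    rw [injective_iff_map_eq_zero]
    intro q hq
    have hiq : ∀ i, ⟪v i, q⟫ = 0 := by
      intro i
      have := congrFun hq i
      simpa [hG₀app] using this
    have : ⟪q, q⟫ = 0 := by
      conv_lhs => rw [← b.sum_repr q]
      rw [sum_inner]
      refine Finset.sum_eq_zero fun i _ => ?_
      have hbi : (⟪b i, q⟫ : ℝ) = 0 := by rw [congrFun hbco i]; exact hiq i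
      rw [real_inner_smul_left, b.sum_repr q, hbi, mul_zero]
    exact inner_self_eq_zero.mp this
  have hfr : Module.finrank ℝ (EuclideanSpace ℝ (Fin d)) = Module.finrank ℝ ({i : Fin (d + 1) // i ≠ 0} → ℝ) := by
    rw [Module.finrank_fintype_fun_eq_card, hcard]
  exact ⟨G₀.linearEquivOfInjective hinj hfr,
    fun q i => by rw [LinearMap.linearEquivOfInjective_apply]; exact hG₀app q i⟩

lemma dist_sq_sum {d : ℕ} (x y : EuclideanSpace ℝ (Fin d)) :
    dist x y ^ 2 = ∑ i, (x i - y i) ^ 2 := by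
  rw [EuclideanSpace.dist_eq, Real.sq_sqrt (by positivity)]
  simp [Real.dist_eq, sq_abs]

theorem sigma_quadric_and_affine_map
    (d : ℕ) (hd : 1 ≤ d) (p p' : Fin (d + 1) → EuclideanSpace ℝ (Fin d))
    (hp : AffineIndependent ℝ p) (hp' : AffineIndependent ℝ p') :
    ∃ (A : EuclideanSpace ℝ (Fin d) →ₗ[ℝ] EuclideanSpace ℝ (Fin d))
      (w : EuclideanSpace ℝ (Fin d)),
      Function.Bijective A ∧
      (∀ q q' : EuclideanSpace ℝ (Fin d),
        (q, q') ∈ SigmaSet d p p' ↔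
          q ∈ Prod.fst '' SigmaSet d p p' ∧ q' = A q + w) ∧
      ((fun q => A q + w) '' (Prod.fst '' SigmaSet d p p') =
        Prod.snd '' SigmaSet d p p') ∧
      ∃ f : MvPolynomial (Fin d) ℝ, f.totalDegree ≤ 2 ∧
        Prod.fst '' SigmaSet d p p' =
          {q : EuclideanSpace ℝ (Fin d) | MvPolynomial.eval (fun i => q i) f = 0} := by
  classical
  obtain ⟨G, hG⟩ := exists_innerEquiv d hd p hp
  obtain ⟨G', hG'⟩ := exists_innerEquiv d hd p' hp'
  set c : {i : Fin (d + 1) // i ≠ 0} → ℝ :=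
    fun i => (‖p' i.1‖ ^ 2 - ‖p' 0‖ ^ 2 - ‖p i.1‖ ^ 2 + ‖p 0‖ ^ 2) / 2 with hc
  set A' : EuclideanSpace ℝ (Fin d) ≃ₗ[ℝ] EuclideanSpace ℝ (Fin d) := G.trans G'.symm with hA'
  set w : EuclideanSpace ℝ (Fin d) := G'.symm c with hw
  have key : ∀ (q : EuclideanSpace ℝ (Fin d)) (i : {i : Fin (d + 1) // i ≠ 0}),
      ⟪p' i.1 - p' 0, A' q + w⟫ = ⟪p i.1 - p 0, q⟫ + c i := by
    intro q i
    have h1 : G' (A' q + w) = G q + c := by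
      rw [map_add]
      simp [hA', hw]
    have h2 := congrFun h1 i
    rw [hG'] at h2
    rw [h2, Pi.add_apply, hG]
  -- characterization of Σ
  have char : ∀ q q' : EuclideanSpace ℝ (Fin d), (q, q') ∈ SigmaSet d p p' ↔
      (q' = A' q + w ∧ dist (p 0) q = dist (p' 0) q') := by
    intro q q'
    constructor
    · intro h
      have hsq : ∀ i, ‖p i - q‖ ^ 2 = ‖p' i - q'‖ ^ 2 := fun i => by
        rw [← dist_eq_norm, ← dist_eq_norm, h i]
      have hlin : ∀ i : {i : Fin (d + 1) // i ≠ 0},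
          ⟪p' i.1 - p' 0, q'⟫ = ⟪p i.1 - p 0, q⟫ + c i := by
        intro i
        have h1 := hsq i.1
        have h0 := hsq 0
        rw [norm_sub_sq_real, norm_sub_sq_real] at h1 h0
        rw [inner_sub_left, inner_sub_left, hc]
        dsimp only
        linarith
      refine ⟨?_, h 0⟩
      apply G'.injective
      funext i
      rw [hG']
      rw [hlin i, ← key q i, hG']
    · rintro ⟨rfl, h0⟩
      intro i
      apply (sq_eq_sq₀ dist_nonneg dist_nonneg).mp
      rcases eq_or_ne i 0 with rfl | hne
      · rw [h0]
      · have hk := key q ⟨i, hne⟩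
        have h0sq : dist (p 0) q ^ 2 = dist (p' 0) (A' q + w) ^ 2 := by rw [h0]
        rw [dist_eq_norm, dist_eq_norm, norm_sub_sq_real, norm_sub_sq_real] at h0sq ⊢
        rw [inner_sub_left, inner_sub_left] at hk
        simp only [hc] at hk
        linarith
  have σchar : ∀ q : EuclideanSpace ℝ (Fin d), q ∈ Prod.fst '' SigmaSet d p p' ↔
      dist (p 0) q = dist (p' 0) (A' q + w) := by
    intro q
    constructor
    · rintro ⟨⟨q1, q2⟩, hmem, rfl⟩
      obtain ⟨h1, h2⟩ := (char q1 q2).mp hmem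
      rw [← h1]
      exact h2
    · intro h
      exact ⟨(q, A' q + w), (char q _).mpr ⟨rfl, h⟩, rfl⟩
  refine ⟨A'.toLinearMap, w, A'.bijective, ?_, ?_, ?_⟩
  · intro q q'
    constructor
    · intro h
      exact ⟨⟨(q, q'), h, rfl⟩, ((char q q').mp h).1⟩
    · rintro ⟨hq, rfl⟩
      exact (char q _).mpr ⟨rfl, (σchar q).mp hq⟩
  · ext q'
    constructor
    · rintro ⟨q, hq, rfl⟩
      exact ⟨(q, A' q + w), (char q _).mpr ⟨rfl, (σchar q).mp hq⟩, rfl⟩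
    · rintro ⟨⟨q1, q2⟩, hmem, rfl⟩
      obtain ⟨h1, h2⟩ := (char q1 q2).mp hmem
      exact ⟨q1, ⟨(q1, q2), hmem, rfl⟩, h1.symm⟩
  -- the quadric
  · set M : Fin d → Fin d → ℝ := fun j k => (A' (EuclideanSpace.single k 1)) j with hM
    have hrepr : ∀ q : EuclideanSpace ℝ (Fin d), q = ∑ k, q k • (EuclideanSpace.single k (1 : ℝ) : EuclideanSpace ℝ (Fin d)) := by
      intro q
      have := (EuclideanSpace.basisFun (Fin d) ℝ).sum_repr q
      simp only [EuclideanSpace.basisFun_apply, EuclideanSpace.basisFun_repr] at this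
      exact this.symm
    have hA : ∀ (q : EuclideanSpace ℝ (Fin d)) (j : Fin d), A' q j = ∑ k, M j k * q k := by
      intro q j
      conv_lhs => rw [hrepr q, map_sum]
      rw [WithLp.ofLp_sum, Finset.sum_apply j Finset.univ _]
      apply Finset.sum_congr rfl
      intro k _
      rw [map_smul]
      simp [hM, mul_comm]
    set f : MvPolynomial (Fin d) ℝ :=
      (∑ j : Fin d, (C ((p 0 : EuclideanSpace ℝ (Fin d)) j) - X j) ^ 2) -
      ∑ j : Fin d, (C ((p' 0 : EuclideanSpace ℝ (Fin d)) j - w j) - ∑ k : Fin d, C (M j k) * X k) ^ 2 with hf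
    have heval : ∀ q : EuclideanSpace ℝ (Fin d), MvPolynomial.eval (fun i => q i) f =
        dist (p 0) q ^ 2 - dist (p' 0) (A' q + w) ^ 2 := by
      intro q
      rw [dist_sq_sum, dist_sq_sum, hf]
      simp only [map_sub, map_sum, map_pow, map_mul, eval_C, eval_X]
      congr 1
      apply Finset.sum_congr rfl
      intro j _
      have : (A' q + w) j = A' q j + w j := rfl
      rw [this, hA q j]
      ring
    have hdeg : f.totalDegree ≤ 2 := by
      have deg1 : ∀ j : Fin d, (C ((p 0 : EuclideanSpace ℝ (Fin d)) j) - X j : MvPolynomial (Fin d) ℝ).totalDegree ≤ 1 := by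
        intro j
        refine le_trans (totalDegree_sub _ _) ?_
        simp [totalDegree_C, totalDegree_X]
      have deg2 : ∀ j : Fin d,
          ((C ((p' 0 : EuclideanSpace ℝ (Fin d)) j - w j) - ∑ k : Fin d, C (M j k) * X k :
            MvPolynomial (Fin d) ℝ)).totalDegree ≤ 1 := by
        intro j
        refine le_trans (totalDegree_sub _ _) ?_
        refine max_le (by rw [totalDegree_C]; omega) ?_
        refine le_trans (totalDegree_finset_sum _ _) ?_
        refine Finset.sup_le fun k _ => ?_
        refine le_trans (totalDegree_mul _ _) ?_
        simp [totalDegree_C, totalDegree_X]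
      rw [hf]
      refine le_trans (totalDegree_sub _ _) (max_le ?_ ?_)
      · refine le_trans (totalDegree_finset_sum _ _) (Finset.sup_le fun j _ => ?_)
        refine le_trans (totalDegree_pow _ _) ?_
        calc 2 * (C ((p 0 : EuclideanSpace ℝ (Fin d)) j) - X j : MvPolynomial (Fin d) ℝ).totalDegree
            ≤ 2 * 1 := by exact Nat.mul_le_mul_left 2 (deg1 j)
          _ = 2 := rfl
      · refine le_trans (totalDegree_finset_sum _ _) (Finset.sup_le fun j _ => ?_)
        refine le_trans (totalDegree_pow _ _) ?_
        calc 2 * ((C ((p' 0 : EuclideanSpace ℝ (Fin d)) j - w j) - ∑ k : Fin d, C (M j k) * X k :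
              MvPolynomial (Fin d) ℝ)).totalDegree
            ≤ 2 * 1 := Nat.mul_le_mul_left 2 (deg2 j)
          _ = 2 := rfl
    refine ⟨f, hdeg, Set.ext fun q => ?_⟩
    rw [Set.mem_setOf_eq, heval q, sub_eq_zero, σchar q]
    exact ⟨fun h => by rw [h], fun h => (sq_eq_sq₀ dist_nonneg dist_nonneg).mp h⟩
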